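/- For l = (l₁, …, l_n) ∈ [0,1]ⁿ, a closed spherical polygon in the unit 3-sphere with edge lengths π·l₁, …, π·l_n exists if and only if the ℓ¹-distance from l to the set of odd vertices of [0,1]ⁿ is at least 1. -/

import Mathlib

open Finset

/-- Geodesic distance on the unit sphere of `ℝ⁴`. -/
noncomputable def sphereDist4 (x y : EuclideanSpace ℝ (Fin 4)) : ℝ :=
  Real.arccos (inner ℝ x y)


open Finset Real

local notation "E4" => EuclideanSpace ℝ (Fin 4)
open RealInnerProductSpace

lemma arccos_antitone : Antitone Real.arccos := fun x y h => by
  unfold Real.arccos; linarith [Real.monotone_arcsin h]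

lemma inner_le_one {x y : E4} (hx : ‖x‖ = 1) (hy : ‖y‖ = 1) :
    |⟪x, y⟫| ≤ 1 := by
  simpa [hx, hy] using abs_real_inner_le_norm x y

lemma sphereDist4_nonneg (x y : E4) : 0 ≤ sphereDist4 x y := Real.arccos_nonneg _

lemma sphereDist4_le_pi (x y : E4) : sphereDist4 x y ≤ Real.pi := Real.arccos_le_pi _

lemma cos_sphereDist4 {x y : E4} (hx : ‖x‖ = 1) (hy : ‖y‖ = 1) :
    Real.cos (sphereDist4 x y) = ⟪x, y⟫ := by
  have h := inner_le_one hx hy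
  rw [abs_le] at h
  exact Real.cos_arccos h.1 h.2

lemma sphereDist4_comm (x y : E4) : sphereDist4 x y = sphereDist4 y x := by
  unfold sphereDist4; rw [real_inner_comm]

lemma sphereDist4_eq_of_inner {x y : E4} {t : ℝ} (ht0 : 0 ≤ t) (ht1 : t ≤ 1)
    (h : ⟪x, y⟫ = Real.cos (Real.pi * t)) : sphereDist4 x y = Real.pi * t := by
  unfold sphereDist4
  rw [h, Real.arccos_cos (by positivity)
    (by nlinarith [Real.pi_pos])]

/-- Triangle inequality for the spherical distance. -/
lemma sphereDist4_triangle {x y z : E4} (hx : ‖x‖ = 1) (hy : ‖y‖ = 1) (hz : ‖z‖ = 1) :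
    sphereDist4 x z ≤ sphereDist4 x y + sphereDist4 y z := by
  set α := sphereDist4 x y with hα
  set β := sphereDist4 y z with hβ
  by_cases hp : Real.pi ≤ α + β
  · exact le_trans (sphereDist4_le_pi x z) hp
  push_neg at hp
  have h0α : 0 ≤ α := sphereDist4_nonneg x y
  have h0β : 0 ≤ β := sphereDist4_nonneg y z
  have hca : Real.cos α = ⟪x, y⟫ := cos_sphereDist4 hx hy
  have hcb : Real.cos β = ⟪y, z⟫ := cos_sphereDist4 hy hz
  -- key inequality : cos (α+β) ≤ ⟪x,z⟫
  have key : Real.cos (α + β) ≤ ⟪x, z⟫ := by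
    have hyy : ⟪y, y⟫ = 1 := by
      rw [real_inner_self_eq_norm_sq, hy]; norm_num
    have hdecomp : ⟪x - ⟪x,y⟫ • y, z - ⟪y,z⟫ • y⟫ = ⟪x, z⟫ - ⟪x,y⟫ * ⟪y,z⟫ := by
      simp only [inner_sub_left, inner_sub_right, real_inner_smul_left,
        real_inner_smul_right, hyy]
      ring
    have hnx : ‖x - ⟪x,y⟫ • y‖ ^ 2 = 1 - ⟪x,y⟫ ^ 2 := by
      rw [← real_inner_self_eq_norm_sq]
      simp only [inner_sub_left, inner_sub_right, real_inner_smul_left,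
        real_inner_smul_right, hyy]
      rw [real_inner_self_eq_norm_sq, hx, real_inner_comm y x]
      ring
    have hnz : ‖z - ⟪y,z⟫ • y‖ ^ 2 = 1 - ⟪y,z⟫ ^ 2 := by
      rw [← real_inner_self_eq_norm_sq]
      simp only [inner_sub_left, inner_sub_right, real_inner_smul_left,
        real_inner_smul_right, hyy]
      rw [real_inner_self_eq_norm_sq, hz, real_inner_comm y z]
      ring
    have hsa : Real.sin α = Real.sqrt (1 - ⟪x,y⟫ ^ 2) := by
      rw [hα]; unfold sphereDist4; rw [Real.sin_arccos]
    have hsb : Real.sin β = Real.sqrt (1 - ⟪y,z⟫ ^ 2) := by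
      rw [hβ]; unfold sphereDist4; rw [Real.sin_arccos]
    have hnx' : ‖x - ⟪x,y⟫ • y‖ = Real.sin α := by
      rw [hsa, ← hnx]
      exact (Real.sqrt_sq (norm_nonneg _)).symm
    have hnz' : ‖z - ⟪y,z⟫ • y‖ = Real.sin β := by
      rw [hsb, ← hnz]
      exact (Real.sqrt_sq (norm_nonneg _)).symm
    have hcs := abs_real_inner_le_norm (x - ⟪x,y⟫ • y) (z - ⟪y,z⟫ • y)
    rw [hdecomp, hnx', hnz'] at hcs
    rw [Real.cos_add, hca, hcb]
    have := abs_le.mp hcs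
    linarith [this.1]
  calc sphereDist4 x z = Real.arccos ⟪x, z⟫ := rfl
    _ ≤ Real.arccos (Real.cos (α + β)) := arccos_antitone key
    _ = α + β := Real.arccos_cos (by linarith) (by linarith)

lemma sphereDist4_chain (r : ℕ → EuclideanSpace ℝ (Fin 4)) (hr : ∀ k, ‖r k‖ = 1) (m : ℕ) :
    sphereDist4 (r 0) (r m) ≤ ∑ k ∈ Finset.range m, sphereDist4 (r k) (r (k+1)) := by
  induction m with
  | zero =>
    have h1 : ⟪r 0, r 0⟫ = 1 := by rw [real_inner_self_eq_norm_sq, hr 0]; norm_num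
    simp [sphereDist4, h1, hr 0, Real.arccos_one]
  | succ m ih =>
    rw [Finset.sum_range_succ]
    linarith [sphereDist4_triangle (hr 0) (hr m) (hr (m+1))]

lemma sphereDist4_smul_smul {x y : E4} {a b : ℝ} :
    sphereDist4 (a • x) (b • y) = Real.arccos (a * b * ⟪x, y⟫) := by
  unfold sphereDist4
  rw [real_inner_smul_left, real_inner_smul_right, mul_assoc]

open Fin.NatCast in
/-- Forward direction: if a closed spherical polygon with side lengths `π l` exists,
then `l` is at `ℓ¹`-distance at least 1 from every odd vertex. -/
lemma polygon_imp_cond (n : ℕ) [NeZero n] (l : Fin n → ℝ)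
    (hl : ∀ i, l i ∈ Set.Icc (0 : ℝ) 1)
    (p : Fin n → EuclideanSpace ℝ (Fin 4))
    (hnorm : ∀ k, ‖p k‖ = 1)
    (hedge : ∀ k : Fin n, sphereDist4 (p k) (p (k + 1)) = Real.pi * l k)
    (v : Fin n → ℝ) (hv : ∀ i, v i = 0 ∨ v i = 1)
    (hodd : ∃ m : ℤ, ∑ i, v i = 2 * (m : ℝ) + 1) :
    1 ≤ ∑ i, |l i - v i| := by
  classical
  set ε : ℕ → ℝ := fun k => ∏ i ∈ Finset.range k, (1 - 2 * v (i : Fin n)) with hε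
  have hεsign : ∀ k, ε k = 1 ∨ ε k = -1 := by
    intro k
    induction k with
    | zero => left; simp [hε]
    | succ k ih =>
      have hstep : ε (k+1) = ε k * (1 - 2 * v (k : Fin n)) := Finset.prod_range_succ _ _
      rcases hv (k : Fin n) with h | h <;> rcases ih with h' | h' <;>
        rw [hstep, h', h] <;> norm_num
  set r : ℕ → EuclideanSpace ℝ (Fin 4) := fun k => ε k • p (k : Fin n) with hr
  have hrnorm : ∀ k, ‖r k‖ = 1 := by
    intro k
    rw [hr]
    simp only [norm_smul, hnorm]
    rcases hεsign k with h | h <;> rw [h] <;> norm_num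
  -- each edge of the modified chain
  have hkey : ∀ k : ℕ, sphereDist4 (r k) (r (k+1))
      = Real.pi * |l (k : Fin n) - v (k : Fin n)| := by
    intro k
    have hstep : ε (k+1) = ε k * (1 - 2 * v (k : Fin n)) := Finset.prod_range_succ _ _
    have hsq : ε k * ε k = 1 := by rcases hεsign k with h | h <;> rw [h] <;> norm_num
    have hcast : (((k+1 : ℕ)) : Fin n) = (k : Fin n) + 1 := by push_cast; ring
    have hinner : ⟪p (k : Fin n), p ((k : Fin n) + 1)⟫ = Real.cos (Real.pi * l (k : Fin n)) := by
      rw [← hedge (k : Fin n), cos_sphereDist4 (hnorm _) (hnorm _)]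
    have hprod : ε k * ε (k+1) = 1 - 2 * v (k : Fin n) := by
      rw [hstep, ← mul_assoc, hsq, one_mul]
    have hexp : sphereDist4 (r k) (r (k+1)) =
        Real.arccos ((1 - 2 * v (k : Fin n)) * Real.cos (Real.pi * l (k : Fin n))) := by
      rw [hr]
      simp only [hcast]
      rw [sphereDist4_smul_smul, hinner, hprod]
    obtain ⟨hl0, hl1⟩ := hl (k : Fin n)
    rcases hv (k : Fin n) with h | h
    · rw [hexp, h, sub_zero, abs_of_nonneg hl0]
      norm_num
      exact Real.arccos_cos (by positivity) (by nlinarith [Real.pi_pos])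
    · rw [hexp, h]
      have : (1 - 2 * (1:ℝ)) * Real.cos (Real.pi * l (k : Fin n))
          = Real.cos (Real.pi - Real.pi * l (k : Fin n)) := by
        rw [Real.cos_pi_sub]; ring
      rw [this, Real.arccos_cos (by nlinarith [Real.pi_pos]) (by nlinarith [Real.pi_pos])]
      rw [abs_of_nonpos (by linarith)]
      ring
  have hr0 : r 0 = p 0 := by
    rw [hr]
    simp [hε]
  have hεn : ε n = -1 := by
    have hfac : ∀ i : Fin n, (1 - 2 * v i) = (-1 : ℝ) ^ (if v i = 1 then 1 else 0) := by
      intro i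
      rcases hv i with h | h <;> rw [h] <;> norm_num
    have h1 : ε n = ∏ i : Fin n, (1 - 2 * v i) := by
      simp only [hε]
      rw [← Fin.prod_univ_eq_prod_range (fun k => 1 - 2 * v (k : Fin n)) n]
      exact Finset.prod_congr rfl fun i _ => by rw [Fin.cast_val_eq_self]
    have h2 : ε n = (-1 : ℝ) ^ (∑ i : Fin n, if v i = 1 then 1 else 0) := by
      rw [h1]
      rw [Finset.prod_congr rfl fun i _ => hfac i]
      exact Finset.prod_pow_eq_pow_sum _ _ _
    obtain ⟨m, hm⟩ := hodd
    have hcastsum : ((∑ i : Fin n, if v i = 1 then 1 else 0 : ℕ) : ℝ) = 2 * m + 1 := by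
      push_cast
      rw [← hm]
      refine Finset.sum_congr rfl fun i _ => ?_
      rcases hv i with h | h <;> simp [h]
    have hoddN : Odd (∑ i : Fin n, if v i = 1 then 1 else 0) := by
      rw [← Int.odd_coe_nat]
      refine ⟨m, ?_⟩
      have : ((∑ i : Fin n, if v i = 1 then 1 else 0 : ℕ) : ℤ) = 2 * m + 1 := by
        exact_mod_cast hcastsum
      linarith
    rw [h2, hoddN.neg_one_pow]
  have hrn : r n = -p 0 := by
    rw [hr]
    simp only [Fin.natCast_self, hεn]
    rw [neg_one_smul]
  have hpi : sphereDist4 (r 0) (r n) = Real.pi := by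
    rw [hr0, hrn]
    unfold sphereDist4
    rw [inner_neg_right, real_inner_self_eq_norm_sq, hnorm 0]
    norm_num
  have hchain := sphereDist4_chain r hrnorm n
  rw [hpi] at hchain
  have hsum : ∑ k ∈ Finset.range n, sphereDist4 (r k) (r (k+1))
      = Real.pi * ∑ i : Fin n, |l i - v i| := by
    rw [Finset.mul_sum]
    rw [← Fin.sum_univ_eq_sum_range (fun k => sphereDist4 (r k) (r (k+1))) n]
    refine Finset.sum_congr rfl fun i _ => ?_
    rw [hkey i.val, Fin.cast_val_eq_self]
  rw [hsum] at hchain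
  nlinarith [Real.pi_pos]

lemma exists_unit_orthogonal (x u : E4) :
    ∃ w : E4, ‖w‖ = 1 ∧ ⟪x, w⟫ = 0 ∧ ⟪u, w⟫ = 0 := by
  classical
  obtain ⟨w₀, hw₀⟩ : ∃ w : (Submodule.span ℝ ({x, u} : Set E4))ᗮ, w ≠ 0 := by
    apply (Module.finrank_pos_iff_exists_ne_zero (R := ℝ)).mp
    have hspan : Module.finrank ℝ (Submodule.span ℝ ({x, u} : Set E4)) ≤ 2 := by
      refine le_trans (finrank_span_le_card ({x, u} : Set E4)) ?_
      rw [Set.toFinset_insert, Set.toFinset_singleton]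
      exact le_trans (Finset.card_insert_le _ _) (by simp)
    have h4 : Module.finrank ℝ E4 = 4 := finrank_euclideanSpace_fin
    have := Submodule.finrank_add_finrank_orthogonal
      (K := Submodule.span ℝ ({x, u} : Set E4)) (𝕜 := ℝ)
    omega
  have hmem := w₀.2
  rw [Submodule.mem_orthogonal] at hmem
  have hw0 : (w₀ : E4) ≠ 0 := fun h => hw₀ (Subtype.ext h)
  have hnorm : ‖(w₀ : E4)‖ ≠ 0 := norm_ne_zero_iff.mpr hw0
  refine ⟨‖(w₀ : E4)‖⁻¹ • (w₀ : E4), ?_, ?_, ?_⟩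
  · rw [norm_smul, norm_inv, norm_norm, inv_mul_cancel₀ hnorm]
  · rw [real_inner_smul_right, hmem x (Submodule.subset_span (by simp)), mul_zero]
  · rw [real_inner_smul_right, hmem u (Submodule.subset_span (by simp)), mul_zero]

lemma aux_sin_zero {t : ℝ} (h0 : 0 ≤ t) (h1 : t ≤ 1) (hs : Real.sin (Real.pi * t) = 0) :
    t = 0 ∨ t = 1 := by
  have hpi := Real.pi_pos
  rcases Real.sin_eq_zero_iff.mp hs with ⟨m, hm⟩
  have hmt : (m : ℝ) = t := by
    have : ((m : ℝ) - t) * Real.pi = 0 := by linarith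
    rcases mul_eq_zero.mp this with h | h
    · linarith
    · linarith
  have hm0 : (0 : ℝ) ≤ (m : ℝ) := by rw [hmt]; exact h0
  have hm1 : (m : ℝ) ≤ 1 := by rw [hmt]; exact h1
  have hm0' : (0 : ℤ) ≤ m := by exact_mod_cast hm0
  have hm1' : m ≤ 1 := by exact_mod_cast hm1
  interval_cases m
  · left; rw [← hmt]; norm_num
  · right; rw [← hmt]; norm_num

set_option maxHeartbeats 1000000 in
/-- Existence of a spherical triangle: given `x, z` at distance `π L`, there is `y` at
distances `π a` and `π b` from them, provided the triangle inequalities hold. -/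
lemma hinge {x z : E4} (hx : ‖x‖ = 1) (hz : ‖z‖ = 1) {L a b : ℝ}
    (ha0 : 0 ≤ a) (ha1 : a ≤ 1) (hb0 : 0 ≤ b) (hb1 : b ≤ 1) (hL0 : 0 ≤ L) (hL1 : L ≤ 1)
    (hd : sphereDist4 x z = Real.pi * L)
    (h1 : |a - b| ≤ L) (h2 : L ≤ a + b) (h3 : a + b + L ≤ 2) :
    ∃ y : E4, ‖y‖ = 1 ∧ sphereDist4 x y = Real.pi * a ∧ sphereDist4 y z = Real.pi * b := by
  have hpi := Real.pi_pos
  have mp : ∀ s t : ℝ, s ≤ t → Real.pi * s ≤ Real.pi * t :=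
    fun s t h => mul_le_mul_of_nonneg_left h hpi.le
  obtain ⟨hab1, hab2⟩ := abs_le.mp h1
  have hxz : ⟪x, z⟫ = Real.cos (Real.pi * L) := by
    rw [← hd, cos_sphereDist4 hx hz]
  have hxx : ⟪x, x⟫ = 1 := by rw [real_inner_self_eq_norm_sq, hx]; norm_num
  -- find an orthonormal frame adapted to x, z
  obtain ⟨u, hu, hxu, hzdec⟩ : ∃ u : E4, ‖u‖ = 1 ∧ ⟪x, u⟫ = 0 ∧
      z = Real.cos (Real.pi * L) • x + Real.sin (Real.pi * L) • u := by
    by_cases hsL : Real.sin (Real.pi * L) = 0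
    · obtain ⟨u, hu, hxu, -⟩ := exists_unit_orthogonal x x
      refine ⟨u, hu, hxu, ?_⟩
      rcases aux_sin_zero hL0 hL1 hsL with h0 | h0
      · have : x = z := by
          apply (inner_eq_one_iff_of_norm_eq_one (𝕜 := ℝ) hx hz).mp
          rw [hxz, h0]; norm_num
        rw [← this, h0]; norm_num
      · have hzx : z = -x := by
          have : ⟪x, -z⟫ = 1 := by
            rw [inner_neg_right, hxz, h0]; norm_num
          have h' := (inner_eq_one_iff_of_norm_eq_one (𝕜 := ℝ) hx (by rw [norm_neg]; exact hz)).mp this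
          rw [h', neg_neg]
        rw [hzx, h0]
        simp [Real.cos_pi, Real.sin_pi]
    · have hsL0 : 0 < Real.sin (Real.pi * L) := by
        rcases lt_or_eq_of_le (Real.sin_nonneg_of_nonneg_of_le_pi (by positivity)
          (by linarith [mp L 1 hL1]) : 0 ≤ Real.sin (Real.pi * L)) with h | h
        · exact h
        · exact absurd h.symm hsL
      refine ⟨(Real.sin (Real.pi * L))⁻¹ • (z - Real.cos (Real.pi * L) • x), ?_, ?_, ?_⟩
      · have hnsq : ‖z - Real.cos (Real.pi * L) • x‖ ^ 2 = Real.sin (Real.pi * L) ^ 2 := by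
          rw [← real_inner_self_eq_norm_sq]
          simp only [inner_sub_left, inner_sub_right, real_inner_smul_left,
            real_inner_smul_right, hxx]
          rw [real_inner_self_eq_norm_sq, hz]
          have hzx : ⟪z, x⟫ = Real.cos (Real.pi * L) := by
            rw [real_inner_comm]; exact hxz
          rw [hzx, hxz]
          have := Real.sin_sq_add_cos_sq (Real.pi * L)
          nlinarith
        have hn : ‖z - Real.cos (Real.pi * L) • x‖ = Real.sin (Real.pi * L) := by
          have h0 := norm_nonneg (z - Real.cos (Real.pi * L) • x)
          nlinarith
        rw [norm_smul, hn, norm_inv, Real.norm_eq_abs, abs_of_pos hsL0,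
          inv_mul_cancel₀ hsL]
      · rw [real_inner_smul_right, inner_sub_right, real_inner_smul_right, hxz, hxx]
        ring
      · rw [smul_smul, mul_inv_cancel₀ hsL, one_smul]
        abel
  obtain ⟨w, hw, hxw, huw⟩ := exists_unit_orthogonal x u
  have huu : ⟪u, u⟫ = 1 := by rw [real_inner_self_eq_norm_sq, hu]; norm_num
  have hww : ⟪w, w⟫ = 1 := by rw [real_inner_self_eq_norm_sq, hw]; norm_num
  have hux : ⟪u, x⟫ = 0 := by rw [real_inner_comm]; exact hxu
  have hwx : ⟪w, x⟫ = 0 := by rw [real_inner_comm]; exact hxw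
  have hwu : ⟪w, u⟫ = 0 := by rw [real_inner_comm]; exact huw
  have hsa0 : 0 ≤ Real.sin (Real.pi * a) :=
    Real.sin_nonneg_of_nonneg_of_le_pi (by positivity) (by linarith [mp a 1 ha1])
  have hsL0 : 0 ≤ Real.sin (Real.pi * L) :=
    Real.sin_nonneg_of_nonneg_of_le_pi (by positivity) (by linarith [mp L 1 hL1])
  -- the two crucial cosine estimates
  have hupper : Real.cos (Real.pi * b) ≤ Real.cos (Real.pi * a) * Real.cos (Real.pi * L)
      + Real.sin (Real.pi * a) * Real.sin (Real.pi * L) := by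
    rw [← Real.cos_sub]
    have habs : Real.cos (Real.pi * a - Real.pi * L)
        = Real.cos (|Real.pi * a - Real.pi * L|) := by
      rcases abs_cases (Real.pi * a - Real.pi * L) with ⟨h, -⟩ | ⟨h, -⟩
      · rw [h]
      · rw [h, Real.cos_neg]
    rw [habs]
    apply Real.cos_le_cos_of_nonneg_of_le_pi (abs_nonneg _) (by linarith [mp b 1 hb1])
    rw [abs_le]
    constructor
    · linarith [mp L (a + b) h2]
    · linarith [mp (a - b) L hab2]
  have hlower : Real.cos (Real.pi * a) * Real.cos (Real.pi * L)
      - Real.sin (Real.pi * a) * Real.sin (Real.pi * L) ≤ Real.cos (Real.pi * b) := by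
    rw [← Real.cos_add]
    by_cases hcase : a + L ≤ 1
    · apply Real.cos_le_cos_of_nonneg_of_le_pi (by positivity)
        (by linarith [mp (a + L) 1 hcase])
      linarith [mp b (a + L) (by linarith)]
    · push_neg at hcase
      have h2pi : Real.cos (Real.pi * a + Real.pi * L)
          = Real.cos (Real.pi * (2 - a - L)) := by
        rw [show Real.pi * (2 - a - L) = 2 * Real.pi - (Real.pi * a + Real.pi * L) by ring,
          Real.cos_two_pi_sub]
      rw [h2pi]
      apply Real.cos_le_cos_of_nonneg_of_le_pi (by positivity)
        (by linarith [mp (2 - a - L) 1 (by linarith)])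
      linarith [mp b (2 - a - L) (by linarith)]
  -- the coefficient D
  classical
  set D : ℝ := if Real.sin (Real.pi * a) * Real.sin (Real.pi * L) = 0 then 0
    else (Real.cos (Real.pi * b) - Real.cos (Real.pi * a) * Real.cos (Real.pi * L))
      / (Real.sin (Real.pi * a) * Real.sin (Real.pi * L)) with hD
  have hD1 : |D| ≤ 1 := by
    rw [hD]
    split_ifs with h
    · simp
    · have hpos : 0 < Real.sin (Real.pi * a) * Real.sin (Real.pi * L) :=
        lt_of_le_of_ne (mul_nonneg hsa0 hsL0) (Ne.symm h)
      rw [abs_div, abs_of_pos hpos, div_le_one hpos, abs_le]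
      constructor
      · linarith
      · linarith
  have hDsq : 0 ≤ 1 - D ^ 2 := by nlinarith [abs_le.mp hD1]
  have hkeyD : Real.cos (Real.pi * a) * Real.cos (Real.pi * L)
      + Real.sin (Real.pi * a) * D * Real.sin (Real.pi * L) = Real.cos (Real.pi * b) := by
    rw [hD]
    split_ifs with h
    · rcases mul_eq_zero.mp h with h' | h'
      · rcases aux_sin_zero ha0 ha1 h' with h0 | h0
        · have hb : b = L := by rw [h0] at hab1 h2; linarith
          rw [h0, hb]; simp
        · have hb : b = 1 - L := by rw [h0] at hab2 h3; linarith
          rw [h0, hb, mul_one, Real.cos_pi, Real.sin_pi,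
            show Real.pi * (1 - L) = Real.pi - Real.pi * L by ring, Real.cos_pi_sub]
          ring
      · rcases aux_sin_zero hL0 hL1 h' with h0 | h0
        · have hb : b = a := by rw [h0] at hab1 hab2; linarith
          rw [h0, hb]; simp
        · have hb : b = 1 - a := by rw [h0] at h2 h3; linarith
          rw [h0, hb, mul_one, Real.cos_pi, Real.sin_pi,
            show Real.pi * (1 - a) = Real.pi - Real.pi * a by ring, Real.cos_pi_sub]
          ring
    · have hne := mul_ne_zero_iff.mp h
      field_simp
      linear_combination (Real.cos (π*b) - Real.cos (π*a)*Real.cos (π*L)) * (Real.sin (π*L) * (Real.sin (π*L))⁻¹) * mul_inv_cancel₀ hne.1 + (Real.cos (π*b) - Real.cos (π*a)*Real.cos (π*L)) * mul_inv_cancel₀ hne.2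
  refine ⟨Real.cos (Real.pi * a) • x + (Real.sin (Real.pi * a) * D) • u
    + (Real.sin (Real.pi * a) * Real.sqrt (1 - D ^ 2)) • w, ?_, ?_, ?_⟩
  · have hyy : ⟪Real.cos (Real.pi * a) • x + (Real.sin (Real.pi * a) * D) • u
        + (Real.sin (Real.pi * a) * Real.sqrt (1 - D ^ 2)) • w,
        Real.cos (Real.pi * a) • x + (Real.sin (Real.pi * a) * D) • u
        + (Real.sin (Real.pi * a) * Real.sqrt (1 - D ^ 2)) • w⟫ = 1 := by
      simp only [inner_add_left, inner_add_right, real_inner_smul_left, real_inner_smul_right,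
        hxx, huu, hww, hxu, hux, hxw, hwx, huw, hwu]
      have hsq := Real.sq_sqrt hDsq
      have hsc := Real.sin_sq_add_cos_sq (Real.pi * a)
      nlinarith [hsq, hsc]
    rw [norm_eq_sqrt_real_inner, hyy, Real.sqrt_one]
  · apply sphereDist4_eq_of_inner ha0 ha1
    simp only [inner_add_right, real_inner_smul_right, hxx, hxu, hxw]
    ring
  · apply sphereDist4_eq_of_inner hb0 hb1
    rw [hzdec]
    simp only [inner_add_left, inner_add_right, real_inner_smul_left, real_inner_smul_right,
      hxx, huu, hxu, hux, hwx, hwu]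
    linear_combination hkeyD

def cutEmb (m : ℕ) : Fin m ↪ Fin (m + 2) :=
  ⟨fun i => i.castSucc.castSucc, fun i j h =>
    Fin.castSucc_injective _ (Fin.castSucc_injective _ h)⟩

def idxA (m : ℕ) : Fin (m + 2) := (Fin.last m).castSucc
def idxB (m : ℕ) : Fin (m + 2) := Fin.last (m + 1)

noncomputable def Fm {m : ℕ} (l : Fin (m + 2) → ℝ) (S : Finset (Fin m)) : ℝ :=
  ∑ i, if i ∈ S then 1 - l (cutEmb m i) else l (cutEmb m i)

lemma cutEmb_ne_idxA {m : ℕ} (i : Fin m) : cutEmb m i ≠ idxA m := by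
  intro h
  have h' := congrArg Fin.val h
  change (i : ℕ) = m at h'; have := i.isLt
  omega

lemma cutEmb_ne_idxB {m : ℕ} (i : Fin m) : cutEmb m i ≠ idxB m := by
  intro h
  have h' := congrArg Fin.val h
  have := i.isLt
  change (i : ℕ) = m + 1 at h'
  omega

lemma idxA_ne_idxB (m : ℕ) : idxA m ≠ idxB m := by
  intro h
  have h' := congrArg Fin.val h
  simp [idxA, idxB] at h'

lemma idxA_not_mem_map {m : ℕ} (S : Finset (Fin m)) : idxA m ∉ S.map (cutEmb m) := by
  intro h
  obtain ⟨i, -, hEq⟩ := Finset.mem_map.mp h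
  exact cutEmb_ne_idxA i hEq

lemma idxB_not_mem_map {m : ℕ} (S : Finset (Fin m)) : idxB m ∉ S.map (cutEmb m) := by
  intro h
  obtain ⟨i, -, hEq⟩ := Finset.mem_map.mp h
  exact cutEmb_ne_idxB i hEq

lemma sum_split {m : ℕ} (l : Fin (m + 2) → ℝ) (T : Finset (Fin (m + 2))) :
    ∑ i, (if i ∈ T then 1 - l i else l i)
      = (∑ i : Fin m, if cutEmb m i ∈ T then 1 - l (cutEmb m i) else l (cutEmb m i))
        + ((if idxA m ∈ T then 1 - l (idxA m) else l (idxA m))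
        + (if idxB m ∈ T then 1 - l (idxB m) else l (idxB m))) := by
  simp only [Fin.sum_univ_castSucc]
  simp only [cutEmb, idxA, idxB, Function.Embedding.coeFn_mk]
  exact add_assoc _ _ _

lemma exists_polygon : ∀ (n : ℕ) (l : Fin (n + 1) → ℝ),
    (∀ i, l i ∈ Set.Icc (0 : ℝ) 1) →
    (∀ S : Finset (Fin (n + 1)), Odd S.card →
      1 ≤ ∑ i, (if i ∈ S then 1 - l i else l i)) →
    ∃ p : Fin (n + 1) → EuclideanSpace ℝ (Fin 4),
      (∀ k, ‖p k‖ = 1) ∧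
      ∀ k : Fin (n + 1), sphereDist4 (p k) (p (k + 1)) = Real.pi * l k := by
  intro n
  induction n with
  | zero =>
    intro l hl hcond
    have h0 : l 0 = 0 := by
      have h := hcond {0} (by simp)
      have h1 := (hl 0).1
      have hs : ∑ i : Fin 1, (if i ∈ ({0} : Finset (Fin 1)) then 1 - l i else l i)
          = 1 - l 0 := by simp
      rw [hs] at h
      linarith
    refine ⟨fun _ => EuclideanSpace.single 0 1,
      fun k => by simp [EuclideanSpace.norm_single], fun k => ?_⟩
    have hself : sphereDist4 (EuclideanSpace.single (0 : Fin 4) (1:ℝ))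
        (EuclideanSpace.single (0 : Fin 4) (1:ℝ)) = 0 := by
      have h1 : ⟪EuclideanSpace.single (0 : Fin 4) (1:ℝ),
          EuclideanSpace.single (0 : Fin 4) (1:ℝ)⟫ = 1 := by
        rw [real_inner_self_eq_norm_sq, EuclideanSpace.norm_single]
        norm_num
      show Real.arccos _ = 0
      rw [h1, Real.arccos_one]
    have hk : l k = 0 := by rw [show k = 0 from Fin.ext (by omega)]; exact h0
    rw [hk, mul_zero]
    exact hself
  | succ m ih =>
    intro l hl hcond
    classical
    obtain ⟨ha0, ha1⟩ := hl (idxA m)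
    obtain ⟨hb0, hb1⟩ := hl (idxB m)
    have hFnonneg : ∀ S, 0 ≤ Fm l S := fun S => Finset.sum_nonneg fun i _ => by
      rcases hl (cutEmb m i) with ⟨h1', h2'⟩; split_ifs <;> linarith
    -- the four consequences of the odd-vertex condition
    have c1 : ∀ S : Finset (Fin m), Odd S.card →
        1 ≤ Fm l S + (l (idxA m) + l (idxB m)) := by
      intro S hS
      have h := hcond (S.map (cutEmb m)) (by rwa [Finset.card_map])
      rw [sum_split] at h
      simp only [Finset.mem_map', if_neg (idxA_not_mem_map S),
        if_neg (idxB_not_mem_map S)] at h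
      unfold Fm
      linarith
    have c2 : ∀ S : Finset (Fin m), Even S.card →
        1 ≤ Fm l S + ((1 - l (idxA m)) + l (idxB m)) := by
      intro S hS
      have hodd : Odd (insert (idxA m) (S.map (cutEmb m))).card := by
        rw [Finset.card_insert_of_notMem (idxA_not_mem_map S), Finset.card_map]
        rw [Nat.odd_add_one, Nat.not_odd_iff_even]
        exact hS
      have h := hcond _ hodd
      rw [sum_split] at h
      simp only [Finset.mem_insert, Finset.mem_map', eq_self_iff_true, true_or, if_true] at h
      have e1 : ∀ i : Fin m, (cutEmb m i = idxA m ∨ i ∈ S) ↔ i ∈ S := fun i =>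
        ⟨fun h' => h'.resolve_left (cutEmb_ne_idxA i), Or.inr⟩
      have e2 : ¬(idxB m = idxA m ∨ idxB m ∈ S.map (cutEmb m)) := by
        rintro (h' | h')
        · exact idxA_ne_idxB m h'.symm
        · exact idxB_not_mem_map S h'
      simp only [e1, if_neg e2] at h
      unfold Fm
      linarith
    have c3 : ∀ S : Finset (Fin m), Even S.card →
        1 ≤ Fm l S + (l (idxA m) + (1 - l (idxB m))) := by
      intro S hS
      have hodd : Odd (insert (idxB m) (S.map (cutEmb m))).card := by
        rw [Finset.card_insert_of_notMem (idxB_not_mem_map S), Finset.card_map]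
        rw [Nat.odd_add_one, Nat.not_odd_iff_even]
        exact hS
      have h := hcond _ hodd
      rw [sum_split] at h
      simp only [Finset.mem_insert, Finset.mem_map', eq_self_iff_true, true_or, if_true] at h
      have e1 : ∀ i : Fin m, (cutEmb m i = idxB m ∨ i ∈ S) ↔ i ∈ S := fun i =>
        ⟨fun h' => h'.resolve_left (cutEmb_ne_idxB i), Or.inr⟩
      have e2 : ¬(idxA m = idxB m ∨ idxA m ∈ S.map (cutEmb m)) := by
        rintro (h' | h')
        · exact idxA_ne_idxB m h'
        · exact idxA_not_mem_map S h'
      simp only [e1, if_neg e2] at h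
      unfold Fm
      linarith
    have c4 : ∀ S : Finset (Fin m), Odd S.card →
        1 ≤ Fm l S + ((1 - l (idxA m)) + (1 - l (idxB m))) := by
      intro S hS
      have hBnotmem : idxB m ∉ S.map (cutEmb m) := idxB_not_mem_map S
      have hAnotmem : idxA m ∉ insert (idxB m) (S.map (cutEmb m)) := by
        rw [Finset.mem_insert]
        rintro (h' | h')
        · exact idxA_ne_idxB m h'
        · exact idxA_not_mem_map S h'
      have hodd : Odd (insert (idxA m) (insert (idxB m) (S.map (cutEmb m)))).card := by
        rw [Finset.card_insert_of_notMem hAnotmem,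
          Finset.card_insert_of_notMem hBnotmem, Finset.card_map]
        rw [Nat.odd_add_one, Nat.not_odd_iff_even, Nat.even_add_one, Nat.not_even_iff_odd]
        exact hS
      have h := hcond _ hodd
      rw [sum_split] at h
      have e1 : ∀ i : Fin m,
          (cutEmb m i ∈ insert (idxA m) (insert (idxB m) (S.map (cutEmb m)))) ↔ i ∈ S := by
        intro i
        simp only [Finset.mem_insert, Finset.mem_map']
        constructor
        · rintro (h' | h' | h')
          · exact absurd h' (cutEmb_ne_idxA i)
          · exact absurd h' (cutEmb_ne_idxB i)
          · exact h'
        · exact fun h' => Or.inr (Or.inr h')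
      have eA : idxA m ∈ insert (idxA m) (insert (idxB m) (S.map (cutEmb m))) :=
        Finset.mem_insert_self _ _
      have eB : idxB m ∈ insert (idxA m) (insert (idxB m) (S.map (cutEmb m))) :=
        Finset.mem_insert_of_mem (Finset.mem_insert_self _ _)
      simp only [e1, if_pos eA, if_pos eB] at h
      unfold Fm
      linarith
    have c5 : ∀ S S' : Finset (Fin m), Odd S.card → Even S'.card →
        1 ≤ Fm l S + Fm l S' := by
      intro S S' hS hS'
      have hne : S ≠ S' := by
        intro h
        rw [h] at hS
        exact (Nat.not_odd_iff_even.mpr hS') hS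
      have hj : ∃ j, ¬(j ∈ S ↔ j ∈ S') := by
        by_contra hc
        push_neg at hc
        exact hne (Finset.ext hc)
      obtain ⟨j, hj⟩ := hj
      have hterm : ∀ (T : Finset (Fin m)) (i : Fin m),
          (if i ∈ T then 1 - l (cutEmb m i) else l (cutEmb m i)) ≤ Fm l T := by
        intro T i
        unfold Fm
        refine Finset.single_le_sum
          (f := fun j => if j ∈ T then 1 - l (cutEmb m j) else l (cutEmb m j))
          (fun j _ => ?_) (Finset.mem_univ i)
        rcases hl (cutEmb m j) with ⟨h1', h2'⟩
        split_ifs <;> linarith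
      have h1 := hterm S j
      have h2 := hterm S' j
      rcases hl (cutEmb m j) with ⟨hj0, hj1⟩
      by_cases hjS : j ∈ S
      · have hjS' : j ∉ S' := fun h => hj ⟨fun _ => h, fun _ => hjS⟩
        rw [if_pos hjS] at h1
        rw [if_neg hjS'] at h2
        linarith
      · have hjS' : j ∈ S' := by
          by_contra h
          exact hj ⟨fun h' => absurd h' hjS, fun h' => absurd h' h⟩
        rw [if_neg hjS] at h1
        rw [if_pos hjS'] at h2
        linarith
    -- choice of the merged length L
    have hEne : (Finset.univ.filter (fun S : Finset (Fin m) => Even S.card)).Nonempty :=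
      ⟨∅, by simp⟩
    set Lmin : ℝ := (Finset.univ.filter (fun S : Finset (Fin m) => Even S.card)).inf'
      hEne (Fm l) with hLmin
    set L : ℝ := min (min (l (idxA m) + l (idxB m)) (2 - l (idxA m) - l (idxB m))) Lmin
      with hLdef
    have hL_le_even : ∀ S : Finset (Fin m), Even S.card → L ≤ Fm l S := by
      intro S hS
      refine le_trans (min_le_right _ _) ?_
      exact Finset.inf'_le _ (by simp [hS])
    have hL_ab : L ≤ l (idxA m) + l (idxB m) :=
      le_trans (min_le_left _ _) (min_le_left _ _)
    have hL_ab2 : L ≤ 2 - l (idxA m) - l (idxB m) :=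
      le_trans (min_le_left _ _) (min_le_right _ _)
    have habs_le : |l (idxA m) - l (idxB m)| ≤ L := by
      rw [hLdef]
      refine le_min (le_min ?_ ?_) ?_
      · rw [abs_le]; constructor <;> linarith
      · rw [abs_le]; constructor <;> linarith
      · refine Finset.le_inf' _ _ fun S hS => ?_
        rw [Finset.mem_filter] at hS
        rw [abs_le]
        have h2 := c2 S hS.2
        have h3 := c3 S hS.2
        constructor <;> linarith
    have hLodd : ∀ S : Finset (Fin m), Odd S.card → 1 - Fm l S ≤ L := by
      intro S hS
      rw [hLdef]
      refine le_min (le_min ?_ ?_) ?_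
      · linarith [c1 S hS]
      · linarith [c4 S hS]
      · refine Finset.le_inf' _ _ fun S' hS' => ?_
        rw [Finset.mem_filter] at hS'
        linarith [c5 S S' hS hS'.2]
    have hL0 : 0 ≤ L := le_trans (abs_nonneg _) habs_le
    have hL1 : L ≤ 1 := by
      rcases le_total (l (idxA m) + l (idxB m)) 1 with h | h
      · linarith
      · linarith
    -- the reduced length vector
    set l' : Fin (m + 1) → ℝ := Fin.snoc (fun i : Fin m => l (cutEmb m i)) L with hl'def
    have hl' : ∀ i, l' i ∈ Set.Icc (0 : ℝ) 1 := by
      intro i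
      refine Fin.lastCases ?_ ?_ i
      · rw [hl'def, Fin.snoc_last]; exact ⟨hL0, hL1⟩
      · intro j
        rw [hl'def, Fin.snoc_castSucc]
        exact hl (cutEmb m j)
    have hcond' : ∀ S' : Finset (Fin (m + 1)), Odd S'.card →
        1 ≤ ∑ i, (if i ∈ S' then 1 - l' i else l' i) := by
      intro S' hS'
      set S : Finset (Fin m) := Finset.univ.filter (fun i => i.castSucc ∈ S') with hSdef
      have hsum1 : ∑ i, (if i ∈ S' then 1 - l' i else l' i)
          = Fm l S + (if Fin.last m ∈ S' then 1 - L else L) := by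
        rw [Fin.sum_univ_castSucc (f := fun i : Fin (m+1) => if i ∈ S' then 1 - l' i else l' i)]
        congr 1
        · unfold Fm
          refine Finset.sum_congr rfl fun i _ => ?_
          rw [hl'def, Fin.snoc_castSucc]
          congr 1
          simp [hSdef]
        · rw [hl'def, Fin.snoc_last]
      have hcard : S'.card = S.card + (if Fin.last m ∈ S' then 1 else 0) := by
        have h1 : S' = Finset.univ.filter (· ∈ S') := by ext i; simp
        conv_lhs => rw [h1]
        rw [Finset.card_filter]
        rw [Fin.sum_univ_castSucc (f := fun i : Fin (m+1) => if i ∈ S' then 1 else 0)]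
        congr 1
        rw [hSdef, Finset.card_filter]
      rw [hsum1]
      by_cases hlast : Fin.last m ∈ S'
      · rw [if_pos hlast]
        rw [hcard, if_pos hlast, Nat.odd_add_one, Nat.not_odd_iff_even] at hS'
        linarith [hL_le_even S hS']
      · rw [if_neg hlast]
        rw [hcard, if_neg hlast, Nat.add_zero] at hS'
        linarith [hLodd S hS']
    obtain ⟨p', hp'norm, hp'edge⟩ := ih l' hl' hcond'
    -- split the last edge using the hinge lemma
    have hlastadd : Fin.last m + 1 = (0 : Fin (m + 1)) := by
      apply Fin.ext
      simp [Fin.add_def]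
    have hLedge : sphereDist4 (p' (Fin.last m)) (p' 0) = Real.pi * L := by
      have := hp'edge (Fin.last m)
      rw [hlastadd] at this
      rw [this, hl'def, Fin.snoc_last]
    obtain ⟨y, hynorm, hxy, hyz⟩ := hinge (hp'norm (Fin.last m)) (hp'norm 0)
      ha0 ha1 hb0 hb1 hL0 hL1 hLedge habs_le hL_ab (by linarith)
    refine ⟨Fin.snoc p' y, ?_, ?_⟩
    · intro k
      refine Fin.lastCases ?_ ?_ k
      · rw [Fin.snoc_last]; exact hynorm
      · intro j; rw [Fin.snoc_castSucc]; exact hp'norm j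
    · intro k
      refine Fin.lastCases ?_ ?_ k
      · -- k = last (m+1) : edge from y back to p' 0
        have hadd : Fin.last (m + 1) + 1 = (0 : Fin (m + 2)) := by
          apply Fin.ext
          simp [Fin.add_def]
        rw [hadd, Fin.snoc_last]
        have h0cast : (0 : Fin (m + 2)) = Fin.castSucc (0 : Fin (m + 1)) := by
          apply Fin.ext
          simp
        rw [h0cast, Fin.snoc_castSucc]
        exact hyz
      · intro j
        refine Fin.lastCases ?_ ?_ j
        · -- k = idxA : edge from p' (last m) to y
          have hadd : (Fin.last m).castSucc + 1 = Fin.last (m + 1) := by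
            apply Fin.ext
            simp [Fin.add_def]
          rw [hadd, Fin.snoc_last, Fin.snoc_castSucc]
          exact hxy
        · intro i
          -- k = cutEmb i : an old edge
          have hadd : (Fin.castSucc (Fin.castSucc i)) + 1
              = Fin.castSucc (Fin.castSucc i + 1) := by
            apply Fin.ext
            have h1 : i.val < m := i.isLt
            simp [Fin.add_def, Nat.mod_eq_of_lt]
          rw [hadd, Fin.snoc_castSucc, Fin.snoc_castSucc]
          have := hp'edge (Fin.castSucc i)
          rw [this, hl'def, Fin.snoc_castSucc]
          rfl

/-- For `l ∈ [0,1]ⁿ`, a closed spherical polygon in `S³` with edge lengths `π·l₁, …, π·l_n`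
exists if and only if the `ℓ¹`-distance from `l` to every odd vertex of the unit cube is at
least `1`. -/
theorem spherical_polygon_exists_iff (n : ℕ) [NeZero n] (l : Fin n → ℝ)
    (hl : ∀ i, l i ∈ Set.Icc (0 : ℝ) 1) :
    (∃ p : Fin n → EuclideanSpace ℝ (Fin 4),
        (∀ k, ‖p k‖ = 1) ∧
        ∀ k : Fin n, sphereDist4 (p k) (p (k + 1)) = Real.pi * l k) ↔
      (∀ v : Fin n → ℝ,
        ((∀ i, v i = 0 ∨ v i = 1) ∧ ∃ m : ℤ, ∑ i, v i = 2 * (m : ℝ) + 1) →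
        1 ≤ ∑ i, |l i - v i|) := by
  classical
  constructor
  · rintro ⟨p, hnorm, hedge⟩ v ⟨hv01, hm⟩
    exact polygon_imp_cond n l hl p hnorm hedge v hv01 hm
  · intro hcond
    obtain ⟨n', rfl⟩ := Nat.exists_eq_succ_of_ne_zero (NeZero.ne n)
    apply exists_polygon n' l hl
    intro S hS
    set v : Fin (n' + 1) → ℝ := fun i => if i ∈ S then 1 else 0 with hv
    have hv01 : ∀ i, v i = 0 ∨ v i = 1 := fun i => by
      rw [hv]; dsimp only; split_ifs <;> simp
    have hsum : ∑ i, v i = (S.card : ℝ) := by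
      rw [hv]
      dsimp only
      rw [Finset.sum_ite_mem, Finset.univ_inter, Finset.sum_const, nsmul_eq_mul, mul_one]
    have hoddv : ∃ m : ℤ, ∑ i, v i = 2 * (m : ℝ) + 1 := by
      obtain ⟨c, hc⟩ := hS
      exact ⟨(c : ℤ), by rw [hsum, hc]; push_cast; ring⟩
    have h := hcond v ⟨hv01, hoddv⟩
    have habs : ∀ i, |l i - v i| = if i ∈ S then 1 - l i else l i := by
      intro i
      obtain ⟨h0, h1⟩ := hl i
      rw [hv]
      dsimp only
      split_ifs
      · rw [abs_of_nonpos (by linarith)]; ring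
      · rw [sub_zero, abs_of_nonneg h0]
    calc (1:ℝ) ≤ ∑ i, |l i - v i| := h
      _ = ∑ i, (if i ∈ S then 1 - l i else l i) :=
        Finset.sum_congr rfl fun i _ => habs i
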